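/- Let Γ be a d-chorded simplicial complex and let Ω be a d-dimensional cycle in Γ. Then over ℤ/2ℤ the sum of the d-faces of Ω is a d-boundary in the induced subcomplex Δ_d(Γ)_{V(Ω)}; that is, there is a (d+1)-chain of (d+1)-faces of Δ_d(Γ)_{V(Ω)} whose boundary equals the sum of the d-faces of Ω. -/

import Mathlib

open Finset

namespace ChordedPaper

variable {V : Type*} [DecidableEq V] [Fintype V]

/-- A simplicial complex: a set of finsets (faces) closed under taking subsets.
(The vertices of the complex are the vertices of its faces, so all singletons of
vertices are automatically faces.) -/
def IsComplex (K : Set (Finset V)) : Prop :=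
  ∀ F ∈ K, ∀ G ⊆ F, G ∈ K

/-- The vertex set `V(K)` of a complex. -/
def verts (K : Set (Finset V)) : Set V :=
  {v | ∃ F ∈ K, v ∈ F}

/-- The `d`-dimensional faces (cardinality `d+1`) of `K`. -/
def dfaces (K : Set (Finset V)) (d : ℕ) : Set (Finset V) :=
  {F | F ∈ K ∧ F.card = d + 1}

/-- `K` is pure `d`-dimensional: every face is contained in a `d`-face. -/
def IsPureD (K : Set (Finset V)) (d : ℕ) : Prop :=
  ∀ F ∈ K, ∃ G ∈ dfaces K d, F ⊆ G

/-- The complex generated by a set of facets. -/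
def gen (S : Set (Finset V)) : Set (Finset V) :=
  {G | ∃ F ∈ S, G ⊆ F}

/-- The pure `d`-skeleton `K^{[d]}`: the complex whose facets are the `d`-faces of `K`. -/
def skel (K : Set (Finset V)) (d : ℕ) : Set (Finset V) :=
  gen (dfaces K d)

/-- The induced subcomplex `K_W` on a set `W` of vertices. -/
def induced (K : Set (Finset V)) (W : Set V) : Set (Finset V) :=
  {F | F ∈ K ∧ ↑F ⊆ W}

/-- Two `d`-faces of `S` are adjacent in a `d`-path if they share `d` vertices. -/
def adj (S : Set (Finset V)) (d : ℕ) (F G : Finset V) : Prop :=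
  F ∈ S ∧ G ∈ S ∧ (F ∩ G).card = d

/-- `d`-path-connectedness: any two `d`-faces are joined by a `d`-path. -/
def PathConn (K : Set (Finset V)) (d : ℕ) : Prop :=
  ∀ F ∈ dfaces K d, ∀ G ∈ dfaces K d, Relation.ReflTransGen (adj (dfaces K d) d) F G

/-- A `d`-dimensional cycle: a pure `d`-dimensional, `d`-path-connected complex in which
every `(d-1)`-face lies in an even number of `d`-faces. -/
def IsCycle (Ω : Set (Finset V)) (d : ℕ) : Prop :=
  IsComplex Ω ∧ IsPureD Ω d ∧ (dfaces Ω d).Nonempty ∧ PathConn Ω d ∧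
    ∀ f ∈ Ω, Finset.card f = d → Even {F | F ∈ dfaces Ω d ∧ f ⊆ F}.ncard

/-- A `d`-dimensional cycle in the complex `Γ`. -/
def CycleIn (Γ Ω : Set (Finset V)) (d : ℕ) : Prop :=
  Ω ⊆ Γ ∧ IsCycle Ω d

/-- Face-minimality: no strict subset of the `d`-faces of `Ω` forms a `d`-dimensional cycle. -/
def FaceMinimal (Ω : Set (Finset V)) (d : ℕ) : Prop :=
  ∀ S : Set (Finset V), S ⊂ dfaces Ω d → ¬ IsCycle (gen S) d

/-- Vertex-minimality of a cycle `Ω` in `Γ`: no `d`-dimensional cycle in `Γ` lies on a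
strict subset of the vertices of `Ω`. -/
def VertexMinimal (Γ Ω : Set (Finset V)) (d : ℕ) : Prop :=
  ∀ Ω', CycleIn Γ Ω' d → ¬ (verts Ω' ⊂ verts Ω)

/-- `d`-completeness: every `(d+1)`-subset of the vertex set is a face. -/
def DComplete (K : Set (Finset V)) (d : ℕ) : Prop :=
  ∀ S : Finset V, ↑S ⊆ verts K → S.card = d + 1 → S ∈ K

/-- A chord set `C` of the `d`-dimensional cycle `Ω` in `Γ`. -/
def ChordSet (Γ Ω : Set (Finset V)) (d : ℕ) (C : Set (Finset V)) : Prop :=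
  C ⊆ dfaces Γ d ∧ (∀ F ∈ C, F ∉ Ω) ∧ (∀ F ∈ C, ↑F ⊆ verts Ω) ∧
    ∃ (n : ℕ) (Ωi : Fin n → Set (Finset V)), 2 ≤ n ∧ (∀ i, IsCycle (Ωi i) d) ∧
      (⋃ i, dfaces (Ωi i) d) = dfaces Ω d ∪ C ∧
      (∀ F ∈ C, Even {i | F ∈ dfaces (Ωi i) d}.ncard) ∧
      (∀ F ∈ dfaces Ω d, Odd {i | F ∈ dfaces (Ωi i) d}.ncard) ∧
      (∀ i, (verts (Ωi i)).ncard < (verts Ω).ncard)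

/-- `Γ` is `d`-chorded: every face-minimal `d`-dimensional cycle in `Γ` that is not
`d`-complete has a chord set in `Γ`. -/
def DChorded (Γ : Set (Finset V)) (d : ℕ) : Prop :=
  ∀ Ω, CycleIn Γ Ω d → FaceMinimal Ω d → ¬ DComplete Ω d → ∃ C, ChordSet Γ Ω d C

/-- `Γ` is `d`-cycle-complete: every vertex-minimal `d`-dimensional cycle in `Γ` is
`d`-complete. -/
def DCycleComplete (Γ : Set (Finset V)) (d : ℕ) : Prop :=
  ∀ Ω, CycleIn Γ Ω d → VertexMinimal Γ Ω d → DComplete Ω d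

/-- The `d`-closure `Δ_d(K)` of the complex `K`, relative to the vertex set `W`:
it contains the faces of `K`, all subsets of `W` of size at most `d`, and every subset
`S` of `W` with `|S| > d+1` all of whose `(d+1)`-subsets are faces of `K`. -/
def closure (W : Set V) (K : Set (Finset V)) (d : ℕ) : Set (Finset V) :=
  K ∪ {S | ↑S ⊆ W ∧ S.card ≤ d} ∪
    {S | ↑S ⊆ W ∧ d + 1 < S.card ∧ ∀ T ⊆ S, T.card = d + 1 → T ∈ K}

/-- A `d`-dimensional tree: a pure `d`-dimensional complex with no `d`-dimensional cycles. -/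
def IsTree (K : Set (Finset V)) (d : ℕ) : Prop :=
  IsComplex K ∧ IsPureD K d ∧ ∀ Ω, ¬ CycleIn K Ω d

/-- The unsigned boundary map on chains (appropriate over rings of characteristic 2):
a face is sent to the sum of the faces obtained by deleting one vertex. -/
noncomputable def ubd {R : Type*} [AddCommMonoid R] (c : Finset V →₀ R) : Finset V →₀ R :=
  c.sum fun F a => F.sum fun v => Finsupp.single (F.erase v) a

/-- The signed (oriented) boundary map on chains, the vertices of each face being listed
in increasing order. -/
noncomputable def sbd [LinearOrder V] {R : Type*} [Ring R] (c : Finset V →₀ R) : Finset V →₀ R :=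
  c.sum fun F a =>
    F.sum fun v => Finsupp.single (F.erase v) ((-1 : R) ^ (F.filter fun w => w < v).card * a)

/-- `c` is an `i`-chain on the complex `K`: it is supported on `i`-faces of `K`. -/
def ChainOn {R : Type*} [Zero R] (K : Set (Finset V)) (i : ℕ) (c : Finset V →₀ R) : Prop :=
  ∀ F ∈ c.support, F ∈ K ∧ F.card = i + 1

/-- Vanishing of the reduced simplicial homology `H̃_i(K; R)` for the unsigned boundary
map (this is reduced simplicial homology when `R` has characteristic 2): every `i`-chain
with vanishing boundary (for `i = 0`, the boundary at the empty face is the augmentation ε)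
is the boundary of an `(i+1)`-chain. -/
def RedHomZeroU (K : Set (Finset V)) (R : Type*) [AddCommMonoid R] (i : ℕ) : Prop :=
  ∀ c : Finset V →₀ R, ChainOn K i c → ubd c = 0 →
    ∃ b : Finset V →₀ R, ChainOn K (i + 1) b ∧ ubd b = c

/-- Vanishing of the reduced simplicial homology `H̃_i(K; R)` (oriented chains). -/
def RedHomZeroS [LinearOrder V] (K : Set (Finset V)) (R : Type*) [Ring R] (i : ℕ) : Prop :=
  ∀ c : Finset V →₀ R, ChainOn K i c → sbd c = 0 →
    ∃ b : Finset V →₀ R, ChainOn K (i + 1) b ∧ sbd b = c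

/-- Orientability of a `d`-dimensional cycle: there is a choice of signs on its `d`-faces
making the resulting ℤ-chain have zero (oriented) boundary. -/
def Orientable [LinearOrder V] (Ω : Set (Finset V)) (d : ℕ) : Prop :=
  ∃ c : Finset V →₀ ℤ, ↑c.support = dfaces Ω d ∧
    (∀ F ∈ c.support, c F = 1 ∨ c F = -1) ∧ sbd c = 0

/-- Orientable-vertex-minimality of a cycle `Ω` in `Γ`: no orientable `d`-dimensional
cycle in `Γ` lies on a strict subset of the vertices of `Ω`. -/
def OrientVertexMinimal [LinearOrder V] (Γ Ω : Set (Finset V)) (d : ℕ) : Prop :=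
  ∀ Ω', CycleIn Γ Ω' d → Orientable Ω' d → ¬ (verts Ω' ⊂ verts Ω)

/-- `Γ` is orientably-`d`-cycle-complete: every orientably-vertex-minimal (orientable)
`d`-dimensional cycle in `Γ` is `d`-complete. -/
def OrientDCycleComplete [LinearOrder V] (Γ : Set (Finset V)) (d : ℕ) : Prop :=
  ∀ Ω, CycleIn Γ Ω d → Orientable Ω d → OrientVertexMinimal Γ Ω d → DComplete Ω d

/-- A minimal non-face of `K`: a subset of the vertex set that is not a face, all of whose
proper subsets are faces. -/
def MinNonFace (K : Set (Finset V)) (S : Finset V) : Prop :=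
  ↑S ⊆ verts K ∧ S ∉ K ∧ ∀ T ⊂ S, T ∈ K

/-! ### Auxiliary lemmas for Lemma 5.2 -/

lemma ubd_zero : ubd (0 : Finset V →₀ ZMod 2) = 0 :=
  Finsupp.sum_zero_index

lemma ubd_single (F : Finset V) (a : ZMod 2) :
    ubd (Finsupp.single F a) = F.sum fun v => Finsupp.single (F.erase v) a := by
  classical
  unfold ubd
  rw [Finsupp.sum_single_index]
  simp

lemma ubd_add (c c' : Finset V →₀ ZMod 2) : ubd (c + c') = ubd c + ubd c' := by
  classical
  unfold ubd
  rw [Finsupp.sum_add_index']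
  · intro F
    simp
  · intro F a b
    simp [Finsupp.single_add, Finset.sum_add_distrib]

lemma ubd_sum {ι : Type*} (s : Finset ι) (f : ι → Finset V →₀ ZMod 2) :
    ubd (∑ i ∈ s, f i) = ∑ i ∈ s, ubd (f i) := by
  classical
  induction s using Finset.cons_induction with
  | empty => simp [ubd_zero]
  | cons i s hi ih => rw [Finset.sum_cons, Finset.sum_cons, ubd_add, ih]

lemma erase_eq_of_not_mem {F g : Finset V} (hgF : g ⊆ F) (hcard : F.card = g.card + 1)
    {v : V} (hv : v ∈ F) (hvg : v ∉ g) : F.erase v = g := by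
  have hsub : g ⊆ F.erase v := Finset.subset_erase.mpr ⟨hgF, hvg⟩
  have hle : (F.erase v).card ≤ g.card := by
    rw [Finset.card_erase_of_mem hv]
    omega
  exact (Finset.eq_of_subset_of_card_le hsub hle).symm

lemma sum_sum_ite_erase (s : Finset (Finset V)) (w : Finset V → ZMod 2) (g : Finset V) :
    (∑ F ∈ s, ∑ u ∈ F, if F.erase u = g then w F else 0)
      = ∑ F ∈ s.filter (fun F => g ⊆ F ∧ F.card = g.card + 1), w F := by
  classical
  rw [Finset.sum_filter]
  refine Finset.sum_congr rfl fun F _ => ?_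
  by_cases h : g ⊆ F ∧ F.card = g.card + 1
  · rw [if_pos h]
    have hkey : ∀ u ∈ F, (F.erase u = g) ↔ u ∈ F \ g := by
      intro u hu
      rw [Finset.mem_sdiff]
      constructor
      · intro he
        exact ⟨hu, he ▸ Finset.notMem_erase u F⟩
      · rintro ⟨_, hug⟩
        exact erase_eq_of_not_mem h.1 h.2 hu hug
    calc (∑ u ∈ F, if F.erase u = g then w F else 0)
        = ∑ u ∈ F, if u ∈ F \ g then w F else 0 := by
          refine Finset.sum_congr rfl fun u hu => ?_
          exact if_congr (hkey u hu) rfl rfl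
      _ = ∑ u ∈ F ∩ (F \ g), w F := Finset.sum_ite_mem _ _ _
      _ = w F := by
          rw [Finset.inter_eq_right.mpr (Finset.sdiff_subset), Finset.sum_const,
            Finset.card_sdiff_of_subset h.1, h.2, Nat.add_sub_cancel_left, one_nsmul]
  · rw [if_neg h]
    refine Finset.sum_eq_zero fun u hu => ?_
    rw [if_neg]
    intro he
    refine h ⟨he ▸ Finset.erase_subset u F, ?_⟩
    have h1 := Finset.card_erase_of_mem hu
    have h2 := Finset.card_pos.mpr ⟨u, hu⟩
    rw [he] at h1
    omega

lemma ubd_apply' (c : Finset V →₀ ZMod 2) (g : Finset V) :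
    ubd c g = ∑ F ∈ c.support.filter (fun F => g ⊆ F ∧ F.card = g.card + 1), c F := by
  classical
  rw [← sum_sum_ite_erase c.support c g]
  show (∑ F ∈ c.support, ∑ u ∈ F, Finsupp.single (F.erase u) (c F)) g = _
  rw [Finsupp.finset_sum_apply]
  refine Finset.sum_congr rfl fun F _ => ?_
  rw [Finsupp.finset_sum_apply]
  exact Finset.sum_congr rfl fun u _ => Finsupp.single_apply

lemma zmod2_ne_zero {a : ZMod 2} (h : a ≠ 0) : a = 1 := by
  revert h
  revert a
  decide

lemma natCast_zmod2_even {n : ℕ} (h : Even n) : (n : ZMod 2) = 0 := by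
  rw [ZMod.natCast_eq_zero_iff]
  exact h.two_dvd

lemma natCast_zmod2_odd {n : ℕ} (h : Odd n) : (n : ZMod 2) = 1 := by
  obtain ⟨k, rfl⟩ := h
  push_cast
  rw [show ((2 : ZMod 2)) = 0 from by decide, zero_mul, zero_add]

lemma even_of_natCast_zmod2_eq_zero {n : ℕ} (h : (n : ZMod 2) = 0) : Even n := by
  rw [ZMod.natCast_eq_zero_iff] at h
  rw [Nat.even_iff]
  omega

lemma sum_support_subset_card (c : Finset V →₀ ZMod 2) {s : Finset (Finset V)}
    (hs : s ⊆ c.support) : ∑ F ∈ s, c F = (s.card : ZMod 2) := by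
  rw [Finset.sum_congr rfl fun F hF => zmod2_ne_zero (Finsupp.mem_support_iff.mp (hs hF))]
  simp

lemma sum_single_apply (s : Finset (Finset V)) (w : Finset V → ZMod 2) (G : Finset V) :
    (∑ F ∈ s, Finsupp.single F (w F)) G = if G ∈ s then w G else 0 := by
  classical
  rw [Finsupp.finset_sum_apply]
  simp [Finsupp.single_apply]

lemma ind_support (s : Finset (Finset V)) :
    (∑ F ∈ s, Finsupp.single F (1 : ZMod 2)).support = s := by
  classical
  ext G
  rw [Finsupp.mem_support_iff, sum_single_apply]
  by_cases h : G ∈ s <;> simp [h]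

lemma cycle_ubd_zero {Ω : Set (Finset V)} {d : ℕ} (hΩ : IsCycle Ω d)
    (c : Finset V →₀ ZMod 2) (hc : ↑c.support = dfaces Ω d) : ubd c = 0 := by
  classical
  ext g
  rw [ubd_apply', Finsupp.coe_zero, Pi.zero_apply]
  by_cases hg : g.card = d
  · rcases Finset.eq_empty_or_nonempty
      (c.support.filter fun F => g ⊆ F ∧ F.card = g.card + 1) with he | ⟨F1, hF1⟩
    · rw [he, Finset.sum_empty]
    · have hF1' := Finset.mem_filter.mp hF1
      have hF1d : F1 ∈ dfaces Ω d := by rw [← hc]; exact hF1'.1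
      have hgΩ : g ∈ Ω := hΩ.1 F1 hF1d.1 g hF1'.2.1
      have heven := hΩ.2.2.2.2 g hgΩ hg
      have hseteq : {F | F ∈ dfaces Ω d ∧ g ⊆ F}
          = ↑(c.support.filter fun F => g ⊆ F ∧ F.card = g.card + 1) := by
        ext F
        constructor
        · rintro ⟨hFd, hgF⟩
          have hFs : F ∈ c.support := by
            rw [← Finset.mem_coe, hc]; exact hFd
          exact Finset.mem_coe.mpr (Finset.mem_filter.mpr ⟨hFs, hgF, by rw [hFd.2, hg]⟩)
        · intro hF
          have hF' := Finset.mem_filter.mp (Finset.mem_coe.mp hF)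
          have hFd : F ∈ dfaces Ω d := by rw [← hc]; exact hF'.1
          exact ⟨hFd, hF'.2.1⟩
      rw [hseteq, Set.ncard_coe_finset] at heven
      rw [sum_support_subset_card c (Finset.filter_subset _ _)]
      exact natCast_zmod2_even heven
  · have he : (c.support.filter fun F => g ⊆ F ∧ F.card = g.card + 1) = ∅ := by
      rw [Finset.filter_eq_empty_iff]
      intro F hF
      have hFd : F ∈ dfaces Ω d := by rw [← hc]; exact hF
      rintro ⟨_, h2⟩
      rw [hFd.2] at h2
      omega
    rw [he, Finset.sum_empty]

lemma even_of_ubd_zero (d : ℕ) (c : Finset V →₀ ZMod 2)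
    (hcard : ∀ F ∈ c.support, F.card = d + 1) (hubd : ubd c = 0)
    (g : Finset V) (hg : g.card = d) :
    Even (c.support.filter fun F => g ⊆ F).card := by
  classical
  have h0 : ubd c g = 0 := by rw [hubd]; rfl
  rw [ubd_apply'] at h0
  have hfe : (c.support.filter fun F => g ⊆ F ∧ F.card = g.card + 1)
      = (c.support.filter fun F => g ⊆ F) := by
    refine Finset.filter_congr fun F hF => ?_
    simp [hcard F hF, hg]
  rw [hfe, sum_support_subset_card c (Finset.filter_subset _ _)] at h0
  exact even_of_natCast_zmod2_eq_zero h0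

lemma cone_lemma (v : V) (c : Finset V →₀ ZMod 2) (hubd : ubd c = 0) :
    ubd (∑ F ∈ c.support.filter (fun F => v ∉ F), Finsupp.single (insert v F) (c F)) = c := by
  classical
  have hstep : ∀ F ∈ c.support.filter (fun F => v ∉ F),
      ubd (Finsupp.single (insert v F) (c F))
        = Finsupp.single F (c F) + ∑ u ∈ F, Finsupp.single (insert v (F.erase u)) (c F) := by
    intro F hF
    have hvF : v ∉ F := (Finset.mem_filter.mp hF).2
    rw [ubd_single, Finset.sum_insert hvF, Finset.erase_insert hvF]
    congr 1
    refine Finset.sum_congr rfl fun u hu => ?_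
    rw [Finset.erase_insert_of_ne (fun h => hvF (by rw [h]; exact hu))]
  rw [ubd_sum, Finset.sum_congr rfl hstep, Finset.sum_add_distrib]
  have hD : (∑ F ∈ c.support.filter (fun F => v ∉ F),
        ∑ u ∈ F, Finsupp.single (insert v (F.erase u)) (c F))
      = ∑ F ∈ c.support.filter (fun F => ¬ v ∉ F), Finsupp.single F (c F) := by
    ext G
    rw [Finsupp.finset_sum_apply, sum_single_apply]
    by_cases hvG : v ∈ G
    · have hcond : ∀ F ∈ c.support.filter (fun F => v ∉ F), ∀ u ∈ F,
          (insert v (F.erase u) = G) ↔ (F.erase u = G.erase v) := by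
        intro F hF u hu
        have hvF : v ∉ F := (Finset.mem_filter.mp hF).2
        constructor
        · intro h
          rw [← h, Finset.erase_insert (fun hx => hvF (Finset.erase_subset u F hx))]
        · intro h
          rw [h, Finset.insert_erase hvG]
      have hstep2 : (∑ F ∈ c.support.filter (fun F => v ∉ F),
            (∑ u ∈ F, Finsupp.single (insert v (F.erase u)) (c F)) G)
          = ∑ F ∈ (c.support.filter (fun F => v ∉ F)).filter
              (fun F => G.erase v ⊆ F ∧ F.card = (G.erase v).card + 1), c F := by
        rw [← sum_sum_ite_erase]
        refine Finset.sum_congr rfl fun F hF => ?_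
        rw [Finsupp.finset_sum_apply]
        refine Finset.sum_congr rfl fun u hu => ?_
        rw [Finsupp.single_apply]
        by_cases h : insert v (F.erase u) = G
        · rw [if_pos h, if_pos ((hcond F hF u hu).mp h)]
        · rw [if_neg h, if_neg (fun h' => h ((hcond F hF u hu).mpr h'))]
      rw [hstep2]
      -- use ubd c = 0 at G.erase v
      have h0 : ubd c (G.erase v) = 0 := by rw [hubd]; rfl
      rw [ubd_apply'] at h0
      rw [← Finset.sum_filter_add_sum_filter_not
        (c.support.filter fun F => G.erase v ⊆ F ∧ F.card = (G.erase v).card + 1)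
        (fun F => v ∉ F)] at h0
      rw [Finset.filter_comm] at h0
      have hswap : ((c.support.filter fun F => G.erase v ⊆ F ∧ F.card = (G.erase v).card + 1).filter
            (fun F => ¬ v ∉ F))
          = (c.support.filter (fun F => ¬ v ∉ F)).filter
              (fun F => G.erase v ⊆ F ∧ F.card = (G.erase v).card + 1) := by
        rw [Finset.filter_comm]
      rw [hswap] at h0
      have hchar : ∀ a b : ZMod 2, a + b = 0 → a = b := by decide
      rw [hchar _ _ h0]
      -- now identify the right-hand filter with {G} or ∅
      have hid : (c.support.filter (fun F => ¬ v ∉ F)).filter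
            (fun F => G.erase v ⊆ F ∧ F.card = (G.erase v).card + 1)
          = (c.support.filter (fun F => ¬ v ∉ F)).filter (fun F => F = G) := by
        refine Finset.filter_congr fun F hF => ?_
        have hvF : v ∈ F := not_not.mp (Finset.mem_filter.mp hF).2
        constructor
        · rintro ⟨hsub, hcard⟩
          have hGF : G ⊆ F := by
            intro x hx
            have hx2 : x ∈ insert v (G.erase v) := by
              rw [Finset.insert_erase hvG]
              exact hx
            rcases Finset.mem_insert.mp hx2 with rfl | hx'
            · exact hvF
            · exact hsub hx'
          have hGcard : (G.erase v).card + 1 = G.card := Finset.card_erase_add_one hvG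
          exact (Finset.eq_of_subset_of_card_le hGF (by omega)).symm
        · intro h
          rw [h]
          exact ⟨Finset.erase_subset v G, (Finset.card_erase_add_one hvG).symm⟩
      rw [hid]
      by_cases hG : G ∈ c.support.filter (fun F => ¬ v ∉ F)
      · rw [if_pos hG]
        rw [Finset.filter_eq' (c.support.filter (fun F => ¬ v ∉ F)) G, if_pos hG,
          Finset.sum_singleton]
      · rw [if_neg hG]
        rw [Finset.filter_eq' (c.support.filter (fun F => ¬ v ∉ F)) G, if_neg hG,
          Finset.sum_empty]
    · -- v ∉ G : both sides are zero
      have hz : (∑ F ∈ c.support.filter (fun F => v ∉ F),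
            (∑ u ∈ F, Finsupp.single (insert v (F.erase u)) (c F)) G) = 0 := by
        refine Finset.sum_eq_zero fun F _ => ?_
        rw [Finsupp.finset_sum_apply]
        refine Finset.sum_eq_zero fun u _ => ?_
        rw [Finsupp.single_apply, if_neg]
        intro h
        exact hvG (h ▸ Finset.mem_insert_self v (F.erase u))
      rw [hz, if_neg]
      intro h
      exact (Finset.mem_filter.mp h).2 (fun h' => hvG h')
  rw [hD, Finset.sum_filter_add_sum_filter_not c.support (fun F => v ∉ F)]
  exact Finsupp.sum_single c

lemma isComplex_gen (S : Set (Finset V)) : IsComplex (gen S) := by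
  rintro F ⟨F', hF', hsub⟩ G hG
  exact ⟨F', hF', hG.trans hsub⟩

lemma dfaces_gen {S : Set (Finset V)} {d : ℕ} (hS : ∀ F ∈ S, F.card = d + 1) :
    dfaces (gen S) d = S := by
  ext G
  constructor
  · rintro ⟨⟨F, hF, hsub⟩, hcard⟩
    have hFc := hS F hF
    have : G = F := Finset.eq_of_subset_of_card_le hsub (by omega)
    rwa [this]
  · intro hG
    exact ⟨⟨G, hG, Finset.Subset.refl G⟩, hS G hG⟩

lemma isPureD_gen {S : Set (Finset V)} {d : ℕ} (hS : ∀ F ∈ S, F.card = d + 1) :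
    IsPureD (gen S) d := by
  rintro F ⟨F', hF', hsub⟩
  refine ⟨F', ?_, hsub⟩
  rw [dfaces_gen hS]
  exact hF'

lemma verts_gen (S : Set (Finset V)) : verts (gen S) = {v | ∃ F ∈ S, v ∈ F} := by
  ext v
  constructor
  · rintro ⟨G, ⟨F, hF, hsub⟩, hv⟩
    exact ⟨F, hF, hsub hv⟩
  · rintro ⟨F, hF, hv⟩
    exact ⟨F, ⟨F, hF, Finset.Subset.refl F⟩, hv⟩

lemma chainOn_mono {K K' : Set (Finset V)} (h : K ⊆ K') {i : ℕ} {c : Finset V →₀ ZMod 2}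
    (hc : ChainOn K i c) : ChainOn K' i c :=
  fun F hF => ⟨h (hc F hF).1, (hc F hF).2⟩

lemma induced_mono (K : Set (Finset V)) {W W' : Set V} (h : W ⊆ W') :
    induced K W ⊆ induced K W' :=
  fun _ hF => ⟨hF.1, hF.2.trans h⟩

/-- The set of vertices appearing in the support of a chain. -/
def vset (c : Finset V →₀ ZMod 2) : Set V := {v | ∃ F ∈ c.support, v ∈ F}

lemma vset_mono {c c' : Finset V →₀ ZMod 2} (h : c.support ⊆ c'.support) :
    vset c ⊆ vset c' := by
  rintro v ⟨F, hF, hv⟩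
  exact ⟨F, h hF, hv⟩
theorem mainAux (Γ : Set (Finset V)) (d : ℕ)
    (hcomplex : IsComplex Γ) (hchorded : DChorded Γ d) :
    ∀ m k : ℕ, ∀ c : Finset V →₀ ZMod 2,
      (∀ F ∈ c.support, F ∈ Γ ∧ F.card = d + 1) → ubd c = 0 →
      (vset c).ncard ≤ m → c.support.card ≤ k →
      ∃ b, ChainOn (induced (closure (verts Γ) Γ d) (vset c)) (d + 1) b ∧ ubd b = c := by
  intro m
  induction m using Nat.strong_induction_on with
  | _ m ihm =>
  intro k
  induction k using Nat.strong_induction_on with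
  | _ k ihk =>
  intro c hsupp hubd hm hk
  classical
  by_cases hc0 : c = 0
  · subst hc0
    refine ⟨0, ?_, ubd_zero⟩
    intro F hF
    simp at hF
  obtain ⟨F0, hF0⟩ := Finsupp.support_nonempty_iff.mpr hc0
  -- splitting helper
  have hsplit : ∀ p : Finset V → Prop,
      (c.support.filter p).Nonempty → (c.support.filter (fun F => ¬ p F)).Nonempty →
      ubd (c.filter p) = 0 →
      ∃ b, ChainOn (induced (closure (verts Γ) Γ d) (vset c)) (d + 1) b ∧ ubd b = c := by
    intro p hp1 hp2 hubd1
    have hcc : c.filter p + c.filter (fun F => ¬ p F) = c :=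
      Finsupp.filter_pos_add_filter_neg c p
    have hubd2 : ubd (c.filter fun F => ¬ p F) = 0 := by
      have h := ubd_add (c.filter p) (c.filter fun F => ¬ p F)
      rw [hcc, hubd, hubd1, zero_add] at h
      exact h.symm
    have hs1 : (c.filter p).support = c.support.filter p := rfl
    have hs2 : (c.filter fun F => ¬ p F).support = c.support.filter (fun F => ¬ p F) := rfl
    have hlt1 : (c.filter p).support.card < k := by
      rw [hs1]
      obtain ⟨F2, hF2⟩ := hp2
      have hss : c.support.filter p ⊂ c.support :=
        Finset.filter_ssubset.mpr ⟨F2, (Finset.mem_filter.mp hF2).1, (Finset.mem_filter.mp hF2).2⟩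
      exact lt_of_lt_of_le (Finset.card_lt_card hss) hk
    have hlt2 : (c.filter fun F => ¬ p F).support.card < k := by
      rw [hs2]
      obtain ⟨F2, hF2⟩ := hp1
      have hss : c.support.filter (fun F => ¬ p F) ⊂ c.support :=
        Finset.filter_ssubset.mpr ⟨F2, (Finset.mem_filter.mp hF2).1,
          not_not.mpr (Finset.mem_filter.mp hF2).2⟩
      exact lt_of_lt_of_le (Finset.card_lt_card hss) hk
    have hsub1 : (c.filter p).support ⊆ c.support := by
      rw [hs1]; exact Finset.filter_subset _ _
    have hsub2 : (c.filter fun F => ¬ p F).support ⊆ c.support := by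
      rw [hs2]; exact Finset.filter_subset _ _
    obtain ⟨b1, hb1chain, hb1⟩ := ihk _ hlt1 (c.filter p)
      (fun F hF => hsupp F (hsub1 hF)) hubd1
      (le_trans (Set.ncard_le_ncard (vset_mono hsub1) (Set.toFinite _)) hm) le_rfl
    obtain ⟨b2, hb2chain, hb2⟩ := ihk _ hlt2 (c.filter fun F => ¬ p F)
      (fun F hF => hsupp F (hsub2 hF)) hubd2
      (le_trans (Set.ncard_le_ncard (vset_mono hsub2) (Set.toFinite _)) hm) le_rfl
    refine ⟨b1 + b2, ?_, by rw [ubd_add, hb1, hb2, hcc]⟩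
    intro F hF
    rcases Finset.mem_union.mp (Finsupp.support_add hF) with h | h
    · exact chainOn_mono (induced_mono _ (vset_mono hsub1)) hb1chain F h
    · exact chainOn_mono (induced_mono _ (vset_mono hsub2)) hb2chain F h
  by_cases hA : ∀ F ∈ c.support,
      Relation.ReflTransGen (adj (↑c.support : Set (Finset V)) d) F0 F
  · -- the support is a single `d`-path-connected component: it generates a cycle
    have hScard : ∀ F ∈ (↑c.support : Set (Finset V)), F.card = d + 1 :=
      fun F hF => (hsupp F hF).2
    have hd : dfaces (gen (↑c.support : Set (Finset V))) d = ↑c.support := dfaces_gen hScard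
    have hsubΓ : gen (↑c.support : Set (Finset V)) ⊆ Γ := by
      rintro G ⟨F, hF, hsub⟩
      exact hcomplex F (hsupp F hF).1 G hsub
    have hvertseq : verts (gen (↑c.support : Set (Finset V))) = vset c := by
      rw [verts_gen]
      rfl
    have hadjsymm : Symmetric (adj (↑c.support : Set (Finset V)) d) := by
      rintro x y ⟨hx, hy, hcard⟩
      exact ⟨hy, hx, by rwa [Finset.inter_comm]⟩
    have hcyc : IsCycle (gen (↑c.support : Set (Finset V))) d := by
      refine ⟨isComplex_gen _, isPureD_gen hScard, ⟨F0, by rw [hd]; exact hF0⟩, ?_, ?_⟩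
      · intro F hF G hG
        rw [hd] at hF hG
        have h1 := hA F hF
        have h2 := hA G hG
        have h3 := ((@Relation.ReflTransGen.stdSymm _ _ ⟨fun a b h => hadjsymm h⟩).symm _ _ h1).trans h2
        unfold PathConn at *
        rwa [hd]
      · intro f hf hfcard
        have hset : {F | F ∈ dfaces (gen (↑c.support : Set (Finset V))) d ∧ f ⊆ F}
            = ↑(c.support.filter (fun F => f ⊆ F)) := by
          ext F
          constructor
          · rintro ⟨hFd, hfF⟩
            rw [hd] at hFd
            exact Finset.mem_coe.mpr (Finset.mem_filter.mpr ⟨hFd, hfF⟩)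
          · intro hF
            have h := Finset.mem_filter.mp (Finset.mem_coe.mp hF)
            refine ⟨?_, h.2⟩
            rw [hd]
            exact h.1
        rw [hset, Set.ncard_coe_finset]
        exact even_of_ubd_zero d c (fun F hF => (hsupp F hF).2) hubd f hfcard
    by_cases hDC : DComplete (gen (↑c.support : Set (Finset V))) d
    · -- cone construction
      obtain ⟨v, hv⟩ : F0.Nonempty := Finset.card_pos.mp (by rw [(hsupp F0 hF0).2]; omega)
      refine ⟨∑ F ∈ c.support.filter (fun F => v ∉ F), Finsupp.single (insert v F) (c F),
        ?_, cone_lemma v c hubd⟩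
      intro F' hF'
      obtain ⟨F, hF, hFs⟩ := Finset.mem_biUnion.mp (Finsupp.support_finset_sum hF')
      have hFmem : F ∈ c.support := (Finset.mem_filter.mp hF).1
      have hvF : v ∉ F := (Finset.mem_filter.mp hF).2
      have hF'eq : F' = insert v F := Finset.mem_singleton.mp (Finsupp.support_single_subset hFs)
      have hcard : F'.card = d + 1 + 1 := by
        rw [hF'eq, Finset.card_insert_of_notMem hvF, (hsupp F hFmem).2]
      have hsubv : ↑F' ⊆ vset c := by
        rw [hF'eq]
        intro x hx
        rcases Finset.mem_insert.mp hx with rfl | hxF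
        · exact ⟨F0, hF0, hv⟩
        · exact ⟨F, hFmem, hxF⟩
      refine ⟨⟨?_, hsubv⟩, hcard⟩
      refine Or.inr ⟨?_, ?_, ?_⟩
      · intro x hx
        obtain ⟨F'', hF'', hx'⟩ := hsubv hx
        exact ⟨F'', (hsupp F'' hF'').1, hx'⟩
      · rw [hcard]; omega
      · intro T hTsub hTcard
        have hTverts : ↑T ⊆ verts (gen (↑c.support : Set (Finset V))) := by
          rw [hvertseq]
          exact fun x hx => hsubv (hTsub hx)
        exact hsubΓ (hDC T hTverts hTcard)
    by_cases hFM : FaceMinimal (gen (↑c.support : Set (Finset V))) d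
    · -- chord set case
      obtain ⟨C, hCΓ, hCnot, hCverts, n, Ωi, hn, hcyci, hunion, heven, hodd, hsmall⟩ :=
        hchorded _ ⟨hsubΓ, hcyc⟩ hFM hDC
      have hDfin : ∀ i, (dfaces (Ωi i) d).Finite := fun _ => Set.toFinite _
      have hDfc : ∀ i, ↑((hDfin i).toFinset) = dfaces (Ωi i) d := fun i => (hDfin i).coe_toFinset
      set ci : Fin n → (Finset V →₀ ZMod 2) :=
        fun i => ∑ F ∈ (hDfin i).toFinset, Finsupp.single F 1 with hci
      have hcisupp : ∀ i, (ci i).support = (hDfin i).toFinset := fun i => ind_support _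
      have hciubd : ∀ i, ubd (ci i) = 0 := fun i =>
        cycle_ubd_zero (hcyci i) (ci i) (by rw [hcisupp, hDfc])
      have hmemUnion : ∀ i, ∀ F ∈ dfaces (Ωi i) d,
          F ∈ dfaces (gen (↑c.support : Set (Finset V))) d ∪ C := by
        intro i F hF
        rw [← hunion]
        exact Set.mem_iUnion.mpr ⟨i, hF⟩
      have hciΓ : ∀ i, ∀ F ∈ (ci i).support, F ∈ Γ ∧ F.card = d + 1 := by
        intro i F hF
        rw [hcisupp] at hF
        have hF' : F ∈ dfaces (Ωi i) d := (hDfin i).mem_toFinset.mp hF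
        rcases hmemUnion i F hF' with h | h
        · rw [hd] at h
          exact hsupp F h
        · exact hCΓ h
      have hvsetsub : ∀ i, vset (ci i) ⊆ vset c := by
        rintro i x ⟨F, hF, hx⟩
        rw [hcisupp] at hF
        have hF' : F ∈ dfaces (Ωi i) d := (hDfin i).mem_toFinset.mp hF
        rcases hmemUnion i F hF' with h | h
        · rw [hd] at h
          exact ⟨F, h, hx⟩
        · exact hvertseq ▸ (hCverts F h) hx
      have hlti : ∀ i, (vset (ci i)).ncard < m := by
        intro i
        have h1 : vset (ci i) ⊆ verts (Ωi i) := by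
          rintro x ⟨F, hF, hx⟩
          rw [hcisupp] at hF
          have hF' : F ∈ dfaces (Ωi i) d := (hDfin i).mem_toFinset.mp hF
          exact ⟨F, hF'.1, hx⟩
        calc (vset (ci i)).ncard ≤ (verts (Ωi i)).ncard :=
              Set.ncard_le_ncard h1 (Set.toFinite _)
          _ < (verts (gen (↑c.support : Set (Finset V)))).ncard := hsmall i
          _ = (vset c).ncard := by rw [hvertseq]
          _ ≤ m := hm
      have hbex : ∀ i, ∃ b, ChainOn (induced (closure (verts Γ) Γ d) (vset (ci i))) (d + 1) b ∧
          ubd b = ci i :=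
        fun i => ihm _ (hlti i) ((ci i).support.card) (ci i) (hciΓ i) (hciubd i) le_rfl le_rfl
      choose b hbchain hbubd using hbex
      refine ⟨∑ i, b i, ?_, ?_⟩
      · intro F hF
        obtain ⟨i, _, hFs⟩ := Finset.mem_biUnion.mp (Finsupp.support_finset_sum hF)
        exact chainOn_mono (induced_mono _ (hvsetsub i)) (hbchain i) F hFs
      · rw [ubd_sum, Finset.sum_congr rfl fun i _ => hbubd i]
        ext G
        rw [Finsupp.finset_sum_apply,
          Finset.sum_congr rfl fun i _ => sum_single_apply ((hDfin i).toFinset) (fun _ => 1) G,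
          Finset.sum_boole]
        have hcount : (Finset.univ.filter fun i => G ∈ (hDfin i).toFinset).card
            = {i | G ∈ dfaces (Ωi i) d}.ncard := by
          rw [← Set.ncard_coe_finset]
          congr 1
          ext i
          simp only [Finset.coe_filter, Finset.mem_univ, true_and, Set.mem_setOf_eq,
            (hDfin i).mem_toFinset]
        by_cases hG : G ∈ c.support
        · have hGd : G ∈ dfaces (gen (↑c.support : Set (Finset V))) d := by
            rw [hd]; exact hG
          have hOdd : Odd (Finset.univ.filter fun i => G ∈ (hDfin i).toFinset).card := by
            rw [hcount]; exact hodd G hGd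
          rw [natCast_zmod2_odd hOdd, zmod2_ne_zero (Finsupp.mem_support_iff.mp hG)]
        · rw [Finsupp.notMem_support_iff.mp hG]
          by_cases hGC : G ∈ C
          · have hEven : Even (Finset.univ.filter fun i => G ∈ (hDfin i).toFinset).card := by
              rw [hcount]; exact heven G hGC
            exact natCast_zmod2_even hEven
          · have hempty : (Finset.univ.filter fun i => G ∈ (hDfin i).toFinset) = ∅ := by
              rw [Finset.filter_eq_empty_iff]
              intro i _ hGi
              have hGd : G ∈ dfaces (Ωi i) d := (hDfin i).mem_toFinset.mp hGi
              rcases hmemUnion i G hGd with h | h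
              · rw [hd] at h
                exact hG h
              · exact hGC h
            rw [hempty]
            simp
    · -- not face-minimal: split off a strictly smaller cycle
      unfold FaceMinimal at hFM
      push_neg at hFM
      obtain ⟨S', hS'ss, hS'cyc⟩ := hFM
      have hS'sub : S' ⊆ (↑c.support : Set (Finset V)) := by
        rw [← hd]
        exact subset_of_ssubset hS'ss
      have hS'card : ∀ F ∈ S', F.card = d + 1 := fun F hF => (hsupp F (hS'sub hF)).2
      have hd' : dfaces (gen S') d = S' := dfaces_gen hS'card
      have hne1 : (c.support.filter (fun F => F ∈ S')).Nonempty := by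
        obtain ⟨F, hF⟩ := hS'cyc.2.2.1
        rw [hd'] at hF
        exact ⟨F, Finset.mem_filter.mpr ⟨hS'sub hF, hF⟩⟩
      have hne2 : (c.support.filter (fun F => ¬ F ∈ S')).Nonempty := by
        obtain ⟨F, hF, hFn⟩ := Set.exists_of_ssubset hS'ss
        rw [hd] at hF
        exact ⟨F, Finset.mem_filter.mpr ⟨hF, hFn⟩⟩
      refine hsplit (fun F => F ∈ S') hne1 hne2 ?_
      refine cycle_ubd_zero hS'cyc _ ?_
      rw [Finsupp.support_filter, hd']
      ext F
      simp only [Finset.coe_filter, Set.mem_setOf_eq, Finsupp.mem_support_iff]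
      constructor
      · rintro ⟨_, h⟩
        exact h
      · intro h
        exact ⟨Finsupp.mem_support_iff.mp (hS'sub h), h⟩
  · -- the support is not a single component: split along a component
    push_neg at hA
    obtain ⟨F2, hF2, hF2n⟩ := hA
    refine hsplit (fun F => Relation.ReflTransGen (adj (↑c.support : Set (Finset V)) d) F0 F)
      ⟨F0, Finset.mem_filter.mpr ⟨hF0, Relation.ReflTransGen.refl⟩⟩
      ⟨F2, Finset.mem_filter.mpr ⟨hF2, hF2n⟩⟩ ?_
    ext g
    rw [ubd_apply', Finsupp.support_filter, Finsupp.coe_zero, Pi.zero_apply]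
    rcases Finset.eq_empty_or_nonempty
      ((c.support.filter fun F =>
          Relation.ReflTransGen (adj (↑c.support : Set (Finset V)) d) F0 F).filter
        (fun F => g ⊆ F ∧ F.card = g.card + 1)) with hTe | ⟨F', hF'⟩
    · rw [hTe, Finset.sum_empty]
    · have hF'1 := Finset.mem_filter.mp hF'
      have hF'2 := Finset.mem_filter.mp hF'1.1
      have hTfull : ((c.support.filter fun F =>
            Relation.ReflTransGen (adj (↑c.support : Set (Finset V)) d) F0 F).filter
          (fun F => g ⊆ F ∧ F.card = g.card + 1))
          = c.support.filter (fun F => g ⊆ F ∧ F.card = g.card + 1) := by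
        apply Finset.Subset.antisymm
        · intro F hFT
          have h1 := Finset.mem_filter.mp hFT
          exact Finset.mem_filter.mpr ⟨(Finset.mem_filter.mp h1.1).1, h1.2⟩
        · intro F hFf
          have h1 := Finset.mem_filter.mp hFf
          have hFsupp := h1.1
          have hgF := h1.2.1
          have hFcard := h1.2.2
          have hdF : F.card = d + 1 := (hsupp F hFsupp).2
          have hdF' : F'.card = d + 1 := (hsupp F' hF'2.1).2
          have hgcard : g.card = d := by omega
          refine Finset.mem_filter.mpr ⟨Finset.mem_filter.mpr ⟨hFsupp, ?_⟩, hgF, hFcard⟩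
          by_cases hFF' : F = F'
          · rw [hFF']
            exact hF'2.2
          · have hadj : adj (↑c.support : Set (Finset V)) d F' F := by
              refine ⟨hF'2.1, hFsupp, ?_⟩
              have h1 : d ≤ (F' ∩ F).card := by
                have := Finset.card_le_card
                  (Finset.subset_inter hF'1.2.1 hgF : g ⊆ F' ∩ F)
                omega
              have h2 : (F' ∩ F).card ≤ d + 1 := by
                have := Finset.card_le_card (Finset.inter_subset_left : F' ∩ F ⊆ F')
                omega
              have hne : (F' ∩ F).card ≠ d + 1 := by
                intro hEq
                have he1 : F' ∩ F = F' :=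
                  Finset.eq_of_subset_of_card_le Finset.inter_subset_left (by omega)
                have he2 : F' ⊆ F := he1 ▸ Finset.inter_subset_right
                exact hFF' (Finset.eq_of_subset_of_card_le he2 (by omega)).symm
              omega
            exact hF'2.2.tail hadj
      calc (∑ F ∈ (c.support.filter fun F =>
              Relation.ReflTransGen (adj (↑c.support : Set (Finset V)) d) F0 F).filter
            (fun F => g ⊆ F ∧ F.card = g.card + 1),
            (c.filter fun F =>
              Relation.ReflTransGen (adj (↑c.support : Set (Finset V)) d) F0 F) F)
          = ∑ F ∈ (c.support.filter fun F =>
              Relation.ReflTransGen (adj (↑c.support : Set (Finset V)) d) F0 F).filter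
            (fun F => g ⊆ F ∧ F.card = g.card + 1), c F := by
            refine Finset.sum_congr rfl fun F hF => ?_
            exact Finsupp.filter_apply_pos _ _
              (Finset.mem_filter.mp (Finset.mem_filter.mp hF).1).2
        _ = ∑ F ∈ c.support.filter (fun F => g ⊆ F ∧ F.card = g.card + 1), c F := by
            rw [hTfull]
        _ = ubd c g := (ubd_apply' c g).symm
        _ = 0 := by rw [hubd]; rfl
/-- Lemma 5.2: if `Ω` is a `d`-dimensional cycle in a `d`-chorded complex
`Γ`, then over `ℤ/2ℤ` the sum of the `d`-faces of `Ω` is a `d`-boundary in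
`Δ_d(Γ)_{V(Ω)}`. -/
theorem cycle_is_boundary_in_closure {V : Type*} [DecidableEq V] [Fintype V]
    (Γ : Set (Finset V)) (d : ℕ)
    (hcomplex : IsComplex Γ) (hpure : IsPureD Γ d) (hchorded : DChorded Γ d)
    (Ω : Set (Finset V)) (hΩ : CycleIn Γ Ω d)
    (c : Finset V →₀ ZMod 2) (hc : ↑c.support = dfaces Ω d) :
    ∃ b : Finset V →₀ ZMod 2,
      ChainOn (induced (closure (verts Γ) Γ d) (verts Ω)) (d + 1) b ∧ ubd b = c := by
  classical
  obtain ⟨hΩΓ, hcyc⟩ := hΩ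
  have hsupp : ∀ F ∈ c.support, F ∈ Γ ∧ F.card = d + 1 := by
    intro F hF
    have hFd : F ∈ dfaces Ω d := by rw [← hc]; exact hF
    exact ⟨hΩΓ hFd.1, hFd.2⟩
  have hubd : ubd c = 0 := cycle_ubd_zero hcyc c hc
  obtain ⟨b, hbchain, hbubd⟩ := mainAux Γ d hcomplex hchorded (vset c).ncard
    c.support.card c hsupp hubd le_rfl le_rfl
  refine ⟨b, ?_, hbubd⟩
  have hsub : vset c ⊆ verts Ω := by
    rintro x ⟨F, hF, hx⟩
    have hFd : F ∈ dfaces Ω d := by rw [← hc]; exact hF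
    exact ⟨F, hFd.1, hx⟩
  exact chainOn_mono (induced_mono _ hsub) hbchain

end ChordedPaper
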